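/- Every vertex-cover of the hypergraph H₁* on ℕ₊ (edges: finite sets E with |E| = min E) is cofinite in ℕ₊. -/
import Mathlib


/-- An edge of the hypergraph `H₁*`: a finite nonempty set `E` of positive
integers with `|E| = min E`. -/
def IsEdgeH1 (E : Finset ℕ) : Prop := ∃ h : E.Nonempty, E.card = E.min' h

/-- A vertex-cover of `H₁*`: a set of positive integers meeting every edge. -/
def IsVertexCoverH1 (A : Set ℕ) : Prop :=
  A ⊆ {n | 0 < n} ∧ ∀ E : Finset ℕ, IsEdgeH1 E → ∃ v ∈ E, v ∈ A

/-- Every vertex-cover of `H₁*` is cofinite in the positive integers. -/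
theorem stmt_3 (A : Set ℕ) (hA : IsVertexCoverH1 A) :
    ({n : ℕ | 0 < n} \ A).Finite := by
  by_contra hinf
  rw [Set.not_infinite.symm, not_not] at hinf
  set B := {n : ℕ | 0 < n} \ A with hB
  obtain ⟨k, hk⟩ := hinf.nonempty
  have hkpos : 0 < k := hk.1
  have hinf' : (B \ Set.Iic k).Infinite := hinf.diff (Set.finite_Iic k)
  obtain ⟨S, hSsub, hScard⟩ := hinf'.exists_subset_card_eq (k - 1)
  have hkS : k ∉ S := fun h => (hSsub h).2 (le_refl k)
  set E : Finset ℕ := insert k S with hE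
  have hEcard : E.card = k := by
    rw [hE, Finset.card_insert_of_notMem hkS, hScard]
    omega
  have hEne : E.Nonempty := ⟨k, Finset.mem_insert_self _ _⟩
  have hmin : E.min' hEne = k := by
    apply le_antisymm
    · exact Finset.min'_le _ _ (Finset.mem_insert_self _ _)
    · apply Finset.le_min'
      intro y hy
      rcases Finset.mem_insert.mp hy with rfl | hy
      · exact le_refl _
      · exact le_of_lt (by simpa using (hSsub hy).2)
  obtain ⟨v, hvE, hvA⟩ := hA.2 E ⟨hEne, by rw [hEcard, hmin]⟩
  rcases Finset.mem_insert.mp hvE with rfl | hv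
  · exact hk.2 hvA
  · exact (hSsub hv).1.2 hvA
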